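/- Let q₀ = x₀ + I y₀ with x₀ ∈ ℝ, y₀ > 0, I ∈ 𝕊, and let 0 < R ≤ y₀. Then the σ-ball Σ(q₀,R) = {q ∈ ℍ : σ(q,q₀) < R} equals the two-dimensional disc {z ∈ L_I : |z−q₀| < R} in the complex plane L_I through q₀. -/

import Mathlib

open Quaternion Filter Topology

noncomputable section

/-- The 2-sphere `𝕊 = {q ∈ ℍ : q² = -1}` of quaternionic imaginary units. -/
def QS : Set ℍ[ℝ] := {q | q ^ 2 = -1}

/-- The slice function `g_I(x,y) = f(x + yI)`. -/
def sliceFun (f : ℍ[ℝ] → ℍ[ℝ]) (I : ℍ[ℝ]) (p : ℝ × ℝ) : ℍ[ℝ] :=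
  f ((p.1 : ℍ[ℝ]) + p.2 • I)

/-- `f` is slice regular on `Ω`: for each imaginary unit `I`, the slice function
`g_I(x,y) = f(x+yI)` is real differentiable and satisfies `∂g/∂x + I ∂g/∂y = 0`
at every point `(x,y)` with `x + yI ∈ Ω`. -/
def SliceRegularOn (f : ℍ[ℝ] → ℍ[ℝ]) (Ω : Set ℍ[ℝ]) : Prop :=
  ∀ I ∈ QS, ∀ p : ℝ × ℝ, ((p.1 : ℍ[ℝ]) + p.2 • I) ∈ Ω →
    DifferentiableAt ℝ (sliceFun f I) p ∧
    fderiv ℝ (sliceFun f I) p (1, 0) + I * fderiv ℝ (sliceFun f I) p (0, 1) = 0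

/-- The 2-sphere `x + y𝕊 = {x + yJ : J ∈ 𝕊}` (a real point when `y = 0`). -/
def qSphere (x y : ℝ) : Set ℍ[ℝ] := {q | ∃ I ∈ QS, q = (x : ℍ[ℝ]) + y • I}

/-- The symmetric open set `U(x₀+y₀𝕊, R) = {q : |(q-x₀)² + y₀²| < R²}`. -/
def sphU (x0 y0 R : ℝ) : Set ℍ[ℝ] :=
  {q | ‖(q - (x0 : ℍ[ℝ])) ^ 2 + ((y0 : ℍ[ℝ])) ^ 2‖ < R ^ 2}

/-- `Ω` is axially symmetric. -/
def AxSymm (Ω : Set ℍ[ℝ]) : Prop :=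
  ∀ x y : ℝ, ∀ I ∈ QS, ((x : ℍ[ℝ]) + y • I) ∈ Ω → qSphere x y ⊆ Ω

/-- `Ω` is a symmetric slice domain: an axially symmetric, open, connected set that
meets the real axis and whose intersection with each slice `L_I = ℝ + ℝI` is connected. -/
def SymmSliceDomain (Ω : Set ℍ[ℝ]) : Prop :=
  IsOpen Ω ∧ IsConnected Ω ∧ AxSymm Ω ∧ (∃ r : ℝ, (r : ℍ[ℝ]) ∈ Ω) ∧
    ∀ I ∈ QS, IsConnected {q ∈ Ω | ∃ a b : ℝ, q = (a : ℍ[ℝ]) + b • I}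

/-- `Im p` and `Im q` are ℝ-linearly dependent, i.e. `p` and `q` lie on a common
complex plane `L_I`. -/
def SameSlice (q p : ℍ[ℝ]) : Prop :=
  ∃ c d : ℝ, (c, d) ≠ 0 ∧ c • q.im + d • p.im = 0

open scoped Classical in
/-- The distance `σ`. -/
def qsigma (q p : ℍ[ℝ]) : ℝ :=
  if SameSlice q p then ‖q - p‖
  else Real.sqrt ((q.re - p.re) ^ 2 + (‖q.im‖ + ‖p.im‖) ^ 2)

lemma QS_re {I : ℍ[ℝ]} (hI : I ∈ QS) : I.re = 0 := by
  have h : I ^ 2 = -1 := hI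
  have h1 : (I ^ 2).re = -1 := by rw [h]; simp
  have h2 : (I ^ 2).imI = 0 := by rw [h]; simp
  have h3 : (I ^ 2).imJ = 0 := by rw [h]; simp
  have h4 : (I ^ 2).imK = 0 := by rw [h]; simp
  simp only [pow_two, Quaternion.re_mul, Quaternion.imI_mul, Quaternion.imJ_mul,
    Quaternion.imK_mul] at h1 h2 h3 h4
  nlinarith [sq_nonneg I.re, sq_nonneg I.imI, sq_nonneg I.imJ, sq_nonneg I.imK,
    sq_nonneg (I.re * I.imI), sq_nonneg (I.re * I.imJ), sq_nonneg (I.re * I.imK)]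

lemma QS_norm {I : ℍ[ℝ]} (hI : I ∈ QS) : ‖I‖ = 1 := by
  have h : ‖I‖ ^ 2 = 1 := by
    rw [← norm_pow, hI]; simp
  nlinarith [norm_nonneg I]

lemma QS_im {I : ℍ[ℝ]} (hI : I ∈ QS) : I.im = I := by
  have := Quaternion.re_add_im I
  rw [QS_re hI] at this
  simpa using this

lemma q0_im (x0 y0 : ℝ) {I : ℍ[ℝ]} (hI : I ∈ QS) :
    ((x0 : ℍ[ℝ]) + y0 • I).im = y0 • I := by
  simp [Quaternion.im_add, Quaternion.im_smul, QS_im hI]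

lemma q0_re (x0 y0 : ℝ) {I : ℍ[ℝ]} (hI : I ∈ QS) :
    ((x0 : ℍ[ℝ]) + y0 • I).re = x0 := by
  simp [QS_re hI]

/-- for `q₀ = x₀ + Iy₀` with `y₀ > 0` and `0 < R ≤ y₀`, the σ-ball
`Σ(q₀,R)` is the 2-dimensional disc of radius `R` around `q₀` in the plane `L_I`. -/
theorem sigma_ball_eq_disc (x0 y0 R : ℝ) (I : ℍ[ℝ]) (hI : I ∈ QS)
    (hy : 0 < y0) (hR : 0 < R) (hRy : R ≤ y0) :
    {q : ℍ[ℝ] | qsigma q ((x0 : ℍ[ℝ]) + y0 • I) < R} =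
      {z : ℍ[ℝ] | (∃ a b : ℝ, z = (a : ℍ[ℝ]) + b • I) ∧
        ‖z - ((x0 : ℍ[ℝ]) + y0 • I)‖ < R} := by
  have hInorm : ‖I‖ = 1 := QS_norm hI
  have him : ((x0 : ℍ[ℝ]) + y0 • I).im = y0 • I := q0_im x0 y0 hI
  have hre : ((x0 : ℍ[ℝ]) + y0 • I).re = x0 := q0_re x0 y0 hI
  ext q
  simp only [Set.mem_setOf_eq]
  constructor
  · intro hq
    unfold qsigma at hq
    by_cases hs : SameSlice q ((x0 : ℍ[ℝ]) + y0 • I)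
    · rw [if_pos hs] at hq
      obtain ⟨c, d, hcd, heq⟩ := hs
      rw [him] at heq
      rcases eq_or_ne c 0 with hc | hc
      · exfalso
        subst hc
        have hd : d ≠ 0 := by
          intro hd; exact hcd (by simp [hd])
        have : d • (y0 • I) = 0 := by simpa using heq
        have hI0 : I ≠ 0 := by
          intro h0
          rw [h0] at hInorm; simp at hInorm
        simp [smul_smul, smul_eq_zero, hd, hy.ne', hI0] at this
      · refine ⟨⟨q.re, -(d * y0) / c, ?_⟩, hq⟩
        have himq : q.im = (-(d * y0) / c) • I := by
          have : c • q.im = (-(d * y0)) • I := by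
            rw [smul_smul] at heq
            have := eq_neg_of_add_eq_zero_left heq
            rw [this]; simp [neg_smul]
          calc q.im = c⁻¹ • (c • q.im) := by rw [smul_smul, inv_mul_cancel₀ hc, one_smul]
          _ = (-(d * y0) / c) • I := by rw [this, smul_smul]; ring_nf
        conv_lhs => rw [← Quaternion.re_add_im q, himq]
    · rw [if_neg hs] at hq
      exfalso
      have h1 : ‖((x0 : ℍ[ℝ]) + y0 • I).im‖ = y0 := by
        rw [him, norm_smul, hInorm]
        simp [abs_of_pos hy]
      have h2 : y0 ≤ Real.sqrt ((q.re - ((x0 : ℍ[ℝ]) + y0 • I).re) ^ 2 +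
          (‖q.im‖ + ‖((x0 : ℍ[ℝ]) + y0 • I).im‖) ^ 2) := by
        rw [h1]
        apply Real.le_sqrt' hy |>.mpr
        nlinarith [norm_nonneg q.im, sq_nonneg (q.re - ((x0 : ℍ[ℝ]) + y0 • I).re)]
      linarith
  · rintro ⟨⟨a, b, rfl⟩, hlt⟩
    have hs : SameSlice ((a : ℍ[ℝ]) + b • I) ((x0 : ℍ[ℝ]) + y0 • I) := by
      refine ⟨y0, -b, ?_, ?_⟩
      · simp [Prod.ext_iff, hy.ne']
      · rw [him, q0_im a b hI, smul_smul, smul_smul]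
        rw [← add_smul]; ring_nf; simp
    unfold qsigma
    rw [if_pos hs]
    exact hlt
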